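/- Let K be a global function field of characteristic p and R a coordinate ring of K whose ideal class group ClassGroup R is trivial. Then for α ∈ Kˣ, the v-adic additive valuation of α is divisible by p for every height-one prime v ∈ HeightOneSpectrum R if and only if α = u·β^p for some unit u ∈ Rˣ and some β ∈ Kˣ. -/

import Mathlib

open IsDedekindDomain FractionalIdeal
open scoped nonZeroDivisors

section Aux

open IsDedekindDomain.HeightOneSpectrum FractionalIdeal

variable {R : Type} [CommRing R] [IsDedekindDomain R]
variable {K : Type} [Field K] [Algebra R K] [IsFractionRing R K]

lemma aux_val_unit (v : HeightOneSpectrum R) (u : Rˣ) :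
    v.valuation K (algebraMap R K (u : R)) = 1 := by
  rw [valuation_of_algebraMap]
  have h1 : v.intValuation (u : R) * v.intValuation ((u⁻¹ : Rˣ) : R) = 1 := by
    have hu : ((u : R) * ((u⁻¹ : Rˣ) : R)) = 1 := by simp
    rw [← _root_.map_mul, hu, v.intValuation.map_one]
  have ha : v.intValuation (u : R) ≤ 1 := v.intValuation_le_one (u : R)
  have hb : v.intValuation ((u⁻¹ : Rˣ) : R) ≤ 1 := v.intValuation_le_one _
  refine le_antisymm ha ?_
  calc (1 : WithZero (Multiplicative ℤ)) = v.intValuation (u : R) * v.intValuation ((u⁻¹ : Rˣ) : R) := h1.symm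
    _ ≤ v.intValuation (u : R) * 1 := mul_le_mul_right hb _
    _ = v.intValuation (u : R) := mul_one _

lemma aux_val_count (v : HeightOneSpectrum R) {x : K} (hx : x ≠ 0) :
    v.valuation K x =
      (Multiplicative.ofAdd (-(FractionalIdeal.count K v (spanSingleton R⁰ x))) :
        Multiplicative ℤ) := by
  obtain ⟨⟨n, d⟩, rfl⟩ := IsLocalization.mk'_surjective R⁰ x
  have hn : n ≠ 0 := by
    rintro rfl
    simp [IsLocalization.mk'_zero] at hx
  have hd : (d : R) ≠ 0 := nonZeroDivisors.coe_ne_zero d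
  have hI : spanSingleton R⁰ (IsLocalization.mk' K n d) ≠ 0 :=
    spanSingleton_ne_zero_iff.mpr hx
  have hrep : spanSingleton R⁰ (IsLocalization.mk' K n d) =
      spanSingleton R⁰ ((algebraMap R K) (d : R))⁻¹ * ↑(Ideal.span {n} : Ideal R) := by
    rw [coeIdeal_span_singleton, spanSingleton_mul_spanSingleton,
      IsFractionRing.mk'_eq_div, div_eq_mul_inv, mul_comm]
  rw [count_well_defined K v hI hrep, valuation_of_mk', intValuation_apply,
    intValuation_apply, v.intValuationDef_if_neg hn, v.intValuationDef_if_neg hd,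
    ← WithZero.exp_sub, WithZero.exp, WithZero.coe_inj]
  congr 1
  ring

end Aux

/-- Let `K` be a global function field of characteristic `p` and `R` a coordinate ring of `K`
with trivial ideal class group. Then for `α ∈ Kˣ`, the `v`-adic valuation of `α` is divisible
by `p` (i.e. is a `p`-th power in `WithZero (Multiplicative ℤ)`) for every height-one prime `v`
of `R` if and only if `α = u * β ^ p` for some unit `u ∈ Rˣ` and some `β ∈ Kˣ`. -/
theorem pDivisible_valuations_iff_unit_mul_pow
    (p : ℕ) (hp : p.Prime)
    (Fq K : Type) [Field Fq] [Fintype Fq] [Field K]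
    [Algebra (RatFunc Fq) K] [FunctionField Fq K] [CharP K p]
    (R : Type) [CommRing R] [IsDedekindDomain R] [Algebra R K] [IsFractionRing R K]
    [Algebra Fq R] [Algebra Fq K] [IsScalarTower Fq R K] [Algebra.FiniteType Fq R]
    (hcl : Subsingleton (ClassGroup R))
    (α : Kˣ) :
    (∀ v : HeightOneSpectrum R,
      ∃ γ : WithZero (Multiplicative ℤ), v.valuation K ((α : K)) = γ ^ p) ↔
    ∃ (u : Rˣ) (β : Kˣ), (α : K) = algebraMap R K u * (β : K) ^ p := by
  constructor
  · intro hval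
    set I := spanSingleton R⁰ (α : K) with hIdef
    have hα : (α : K) ≠ 0 := α.ne_zero
    have hI : I ≠ 0 := spanSingleton_ne_zero_iff.mpr hα
    have hdvd : ∀ v : HeightOneSpectrum R, (p : ℤ) ∣ count K v I := by
      intro v
      obtain ⟨γ, hγ⟩ := hval v
      have hγ0 : γ ≠ 0 := by
        rintro rfl
        rw [zero_pow hp.ne_zero] at hγ
        exact ((v.valuation K).ne_zero_iff.mpr hα) hγ
      obtain ⟨g, rfl⟩ := WithZero.ne_zero_iff_exists.mp hγ0
      rw [aux_val_count v hα, ← WithZero.coe_pow, WithZero.coe_inj] at hγ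
      have h2 : -(count K v I) = (p : ℤ) * Multiplicative.toAdd g := by
        simpa [toAdd_pow, nsmul_eq_mul] using congrArg Multiplicative.toAdd hγ
      exact ⟨-(Multiplicative.toAdd g), by rw [mul_neg, ← h2, neg_neg]⟩
    set e : HeightOneSpectrum R → ℤ := fun v => count K v I / p with hedef
    have he : ∀ v, count K v I = p * e v := fun v => (Int.mul_ediv_cancel' (hdvd v)).symm
    have hefin : ∀ᶠ v : HeightOneSpectrum R in Filter.cofinite, e v = 0 := by
      filter_upwards [finite_factors I] with v hv
      simp [hedef, hv]
    set J : FractionalIdeal R⁰ K :=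
      ∏ᶠ v : HeightOneSpectrum R, (v.asIdeal : FractionalIdeal R⁰ K) ^ e v with hJdef
    have hJcount : ∀ v, count K v J = e v := fun v => count_finprod K v e hefin
    have hJ0 : J ≠ 0 := by
      have hsub : (Function.mulSupport
          fun v : HeightOneSpectrum R => (v.asIdeal : FractionalIdeal R⁰ K) ^ e v) ⊆
          {v | e v ≠ 0} := by
        intro v hv
        simp only [Set.mem_setOf_eq]
        intro h0
        apply hv
        simp [h0]
      have hfin : (Function.mulSupport
          fun v : HeightOneSpectrum R => (v.asIdeal : FractionalIdeal R⁰ K) ^ e v).Finite :=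
        Set.Finite.subset (Filter.eventually_cofinite.mp hefin) hsub
      rw [hJdef, finprod_eq_prod _ hfin]
      refine Finset.prod_ne_zero_iff.mpr fun v _ => ?_
      exact zpow_ne_zero _ (coeIdeal_ne_zero.mpr v.ne_bot)
    have hIJ : I = J ^ p := by
      have h1 : ∀ v, count K v I = count K v (J ^ p) := by
        intro v
        rw [count_pow, hJcount, ← he v]
      calc I = ∏ᶠ v : HeightOneSpectrum R, (v.asIdeal : FractionalIdeal R⁰ K) ^ count K v I :=
            (finprod_heightOneSpectrum_factorization' K hI).symm
        _ = ∏ᶠ v : HeightOneSpectrum R,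
              (v.asIdeal : FractionalIdeal R⁰ K) ^ count K v (J ^ p) :=
            finprod_congr fun v => by rw [h1 v]
        _ = J ^ p := finprod_heightOneSpectrum_factorization' K (pow_ne_zero p hJ0)
    have hmk : ClassGroup.mk K (Units.mk0 J hJ0) = 1 := Subsingleton.elim _ _
    have hprinc : ((Units.mk0 J hJ0 : FractionalIdeal R⁰ K) : Submodule R K).IsPrincipal :=
      ClassGroup.mk_eq_one_iff.mp hmk
    rw [Units.val_mk0] at hprinc
    obtain ⟨b, hb⟩ := (isPrincipal_iff J).mp hprinc
    have hb0 : b ≠ 0 := by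
      rintro rfl
      rw [spanSingleton_zero] at hb
      exact hJ0 hb
    have hspan : spanSingleton R⁰ ((b : K) ^ p) = spanSingleton R⁰ (α : K) := by
      rw [← spanSingleton_pow, ← hb, ← hIJ]
    haveI : Module.IsTorsionFree R K :=
      inferInstance
    obtain ⟨z, hz⟩ := (spanSingleton_eq_spanSingleton (R := R)).mp hspan
    refine ⟨z, Units.mk0 b hb0, ?_⟩
    rw [Units.val_mk0, ← hz, Units.smul_def, Algebra.smul_def]
  · rintro ⟨u, β, hαβ⟩ v
    refine ⟨v.valuation K (β : K), ?_⟩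
    rw [hαβ, _root_.map_mul, _root_.map_pow, aux_val_unit, one_mul]
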